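/- Define Mag : ℝ^N → ℝ by Mag(θ) = |Σ_{i=1}^N a_i e^{jθ_i}| with all a_i > 0. Then every local maximum point of Mag is a global maximum point, with maximum value Σ_{i=1}^N a_i attained exactly when all phases θ_i are equal modulo 2π. -/

import Mathlib

open Complex

private lemma auxA (u v δ : ℝ) (hδ : 0 < δ)
    (h : ∀ t : ℝ, |t| < δ → u * Real.cos t + v * Real.sin t ≤ u) :
    v = 0 ∧ 0 ≤ u := by
  have hloc : IsLocalMax (fun t => u * Real.cos t + v * Real.sin t) 0 := by
    filter_upwards [Metric.ball_mem_nhds (0 : ℝ) hδ] with t ht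
    have ht' : |t| < δ := by simpa [Real.dist_eq] using ht
    simpa using h t ht'
  have hd : HasDerivAt (fun t => u * Real.cos t + v * Real.sin t)
      (u * (-Real.sin 0) + v * Real.cos 0) 0 :=
    ((Real.hasDerivAt_cos 0).const_mul u).add ((Real.hasDerivAt_sin 0).const_mul v)
  have hv : v = 0 := by
    have h0 := hloc.deriv_eq_zero
    rw [hd.deriv] at h0
    simpa using h0
  refine ⟨hv, ?_⟩
  by_contra hu
  push_neg at hu
  set t : ℝ := min (δ / 2) 1 with ht
  have ht0 : 0 < t := lt_min (by linarith) one_pos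
  have htδ : |t| < δ := by
    rw [abs_of_pos ht0]
    calc t ≤ δ / 2 := min_le_left _ _
      _ < δ := by linarith
  have hc : Real.cos t < 1 := by
    have h1 : Real.cos t ≤ 1 := Real.cos_le_one t
    rcases lt_or_eq_of_le h1 with h | h
    · exact h
    · exfalso
      have hπ : (2:ℝ) < 2 * Real.pi := by
        have := Real.pi_gt_three
        linarith
      have ht2 : t < 2 * Real.pi := by
        have : t ≤ 1 := min_le_right _ _
        linarith
      have htn : -(2 * Real.pi) < t := by linarith
      have := (Real.cos_eq_one_iff_of_lt_of_lt htn ht2).1 h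
      exact ht0.ne' this
  have := h t htδ
  rw [hv] at this
  nlinarith

private lemma auxB (z : ℂ) (h : ‖z‖ = z.re) : z = (z.re : ℂ) := by
  have h2 : Complex.normSq z = z.re * z.re := by
    have := Complex.sq_norm z
    rw [h] at this
    nlinarith [this]
  have him : z.im = 0 := by
    have := Complex.normSq_apply z
    nlinarith [this, h2]
  exact Complex.ext rfl (by simpa using him)

/-- For `Mag θ = |Σ_i a_i e^{jθ_i}|` with all `a_i > 0`: the global maximum value is
`Σ_i a_i`, every local maximum point is a global maximum point, and the maximum value is
attained exactly when all phases are equal modulo `2π`. -/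
theorem mag_localMax_is_globalMax
    {N : ℕ} (a : Fin N → ℝ) (ha : ∀ i, 0 < a i)
    (Mag : EuclideanSpace ℝ (Fin N) → ℝ)
    (hMag : ∀ θ, Mag θ = ‖∑ i, (a i : ℂ) * Complex.exp ((θ i : ℂ) * Complex.I)‖) :
    (∀ θ, Mag θ ≤ ∑ i, a i) ∧
    (∀ θ, (∃ δ > 0, ∀ ψ ∈ Metric.ball θ δ, Mag ψ ≤ Mag θ) → Mag θ = ∑ i, a i) ∧
    (∀ θ, Mag θ = ∑ i, a i ↔
      ∀ i j, Complex.exp ((θ i : ℂ) * Complex.I) = Complex.exp ((θ j : ℂ) * Complex.I)) := by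
  classical
  set E : EuclideanSpace ℝ (Fin N) → Fin N → ℂ :=
    fun θ i => Complex.exp ((θ i : ℂ) * Complex.I) with hE
  set S : EuclideanSpace ℝ (Fin N) → ℂ := fun θ => ∑ i, (a i : ℂ) * E θ i with hSdef
  have hMagS : ∀ θ, Mag θ = ‖S θ‖ := fun θ => hMag θ
  have habsE : ∀ θ i, ‖E θ i‖ = 1 := fun θ i => Complex.norm_exp_ofReal_mul_I _
  -- part 1 : upper bound
  have h1 : ∀ θ, Mag θ ≤ ∑ i, a i := by
    intro θ
    rw [hMagS]
    calc ‖S θ‖ ≤ ∑ i, ‖(a i : ℂ) * E θ i‖ := norm_sum_le _ _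
      _ = ∑ i, a i := by
          refine Finset.sum_congr rfl fun i _ => ?_
          rw [norm_mul, habsE, mul_one, Complex.norm_real, Real.norm_eq_abs, abs_of_pos (ha i)]
  -- key cancellation
  have hkey : ∀ θ, 0 < ‖S θ‖ →
      (∀ k, S θ * (starRingEnd ℂ) (E θ k) = ((‖S θ‖ : ℝ) : ℂ)) →
      ∀ i j, E θ i = E θ j := by
    intro θ hpos hz i j
    have hS0 : S θ ≠ 0 := by
      intro h0
      rw [h0] at hpos
      simp at hpos
    have h := (hz i).trans (hz j).symm
    have hc := mul_left_cancel₀ hS0 h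
    have := congrArg (starRingEnd ℂ) hc
    simpa using this
  -- reverse direction of part 3
  have h3r : ∀ θ, (∀ i j, E θ i = E θ j) → Mag θ = ∑ i, a i := by
    intro θ hall
    rcases isEmpty_or_nonempty (Fin N) with hN | hN
    · rw [hMagS]
      simp [hSdef]
    · obtain ⟨k⟩ := hN
      have hs : S θ = ((∑ i, a i : ℝ) : ℂ) * E θ k := by
        simp only [hSdef]
        push_cast
        rw [Finset.sum_mul]
        exact Finset.sum_congr rfl fun i _ => by rw [hall i k]
      rw [hMagS, hs, norm_mul, habsE, mul_one, Complex.norm_real, Real.norm_eq_abs,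
        _root_.abs_of_nonneg (Finset.sum_nonneg fun i _ => (ha i).le)]
  -- forward direction of part 3
  have h3l : ∀ θ, Mag θ = ∑ i, a i → ∀ i j, E θ i = E θ j := by
    intro θ heq
    rcases isEmpty_or_nonempty (Fin N) with hN | hN
    · intro i j
      exact (hN.false i).elim
    · have hAS : ‖S θ‖ = ∑ i, a i := by rw [← hMagS, heq]
      have hpos : 0 < ‖S θ‖ := by
        rw [hAS]
        exact Finset.sum_pos (fun i _ => ha i) Finset.univ_nonempty
      have habsz : ∀ i, ‖S θ * (starRingEnd ℂ) (E θ i)‖ = ‖S θ‖ := by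
        intro i
        rw [norm_mul, Complex.norm_conj, habsE, mul_one]
      have hle : ∀ i, (S θ * (starRingEnd ℂ) (E θ i)).re ≤ ‖S θ‖ :=
        fun i => (Complex.re_le_norm _).trans_eq (habsz i)
      have hsum : ∑ i, a i * (S θ * (starRingEnd ℂ) (E θ i)).re = (‖S θ‖) ^ 2 := by
        have hc : ∑ i, (a i : ℂ) * (S θ * (starRingEnd ℂ) (E θ i)) =
            S θ * (starRingEnd ℂ) (S θ) := by
          conv_rhs => rw [hSdef]
          simp only
          rw [map_sum, Finset.mul_sum]
          refine Finset.sum_congr rfl fun i _ => ?_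
          rw [map_mul, Complex.conj_ofReal]
          ring
        have hre := congrArg Complex.re hc
        rw [Complex.re_sum] at hre
        simp only [Complex.re_ofReal_mul] at hre
        rw [hre, Complex.mul_conj, Complex.ofReal_re, ← Complex.sq_norm]
      have hall : ∀ i, (S θ * (starRingEnd ℂ) (E θ i)).re = ‖S θ‖ := by
        by_contra hcon
        push_neg at hcon
        obtain ⟨i0, hi0⟩ := hcon
        have hlt : (S θ * (starRingEnd ℂ) (E θ i0)).re < ‖S θ‖ :=
          lt_of_le_of_ne (hle i0) hi0
        have hstrict : ∑ i, a i * (S θ * (starRingEnd ℂ) (E θ i)).re <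
            ∑ i, a i * ‖S θ‖ :=
          Finset.sum_lt_sum (fun i _ => mul_le_mul_of_nonneg_left (hle i) (ha i).le)
            ⟨i0, Finset.mem_univ _, mul_lt_mul_of_pos_left hlt (ha i0)⟩
        rw [hsum, ← Finset.sum_mul, ← hAS] at hstrict
        nlinarith [hpos, hstrict]
      intro i j
      refine hkey θ hpos (fun k => ?_) i j
      have hB := auxB _ ((habsz k).trans (hall k).symm)
      rw [hB, hall k]
  -- part 2 : local max is global max
  have h2 : ∀ θ, (∃ δ > 0, ∀ ψ ∈ Metric.ball θ δ, Mag ψ ≤ Mag θ) → Mag θ = ∑ i, a i := by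
    intro θ hloc
    obtain ⟨δ, hδ, hmax⟩ := hloc
    rcases isEmpty_or_nonempty (Fin N) with hN | hN
    · rw [hMagS]
      simp [hSdef]
    · -- main per-coordinate fact
      have main : ∀ k : Fin N, S θ * (starRingEnd ℂ) (E θ k) = ((‖S θ‖ : ℝ) : ℂ) ∧
          a k ≤ (S θ * (starRingEnd ℂ) (E θ k)).re := by
        intro k
        set w : ℂ := (S θ - (a k : ℂ) * E θ k) * (starRingEnd ℂ) (E θ k) with hw
        -- normSq expansion
        have hexp : ∀ t : ℝ, Complex.normSq ((S θ - (a k : ℂ) * E θ k) +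
            ((a k : ℂ) * E θ k) * Complex.exp ((t : ℂ) * I)) =
            Complex.normSq (S θ - (a k : ℂ) * E θ k) + (a k) ^ 2 +
              2 * (a k) * (w.re * Real.cos t + w.im * Real.sin t) := by
          intro t
          rw [Complex.normSq_add]
          have hA : Complex.normSq (((a k : ℂ) * E θ k) * Complex.exp ((t : ℂ) * I)) =
              (a k) ^ 2 := by
            rw [Complex.normSq_mul, Complex.normSq_mul, Complex.normSq_ofReal]
            have hn1 : Complex.normSq (E θ k) = 1 := by
              rw [Complex.normSq_eq_norm_sq, habsE]; norm_num
            have hn2 : Complex.normSq (Complex.exp ((t : ℂ) * I)) = 1 := by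
              rw [Complex.normSq_eq_norm_sq, Complex.norm_exp_ofReal_mul_I]; norm_num
            rw [hn1, hn2]; ring
          have hconjexp : (starRingEnd ℂ) (Complex.exp ((t : ℂ) * I)) =
              Complex.exp (((-t : ℝ) : ℂ) * I) := by
            rw [← Complex.exp_conj]
            congr 1
            simp [Complex.conj_I, Complex.conj_ofReal]
          have hB : ((S θ - (a k : ℂ) * E θ k) *
              (starRingEnd ℂ) (((a k : ℂ) * E θ k) * Complex.exp ((t : ℂ) * I))).re =
              (a k) * (w.re * Real.cos t + w.im * Real.sin t) := by
            have hx : (S θ - (a k : ℂ) * E θ k) *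
                (starRingEnd ℂ) (((a k : ℂ) * E θ k) * Complex.exp ((t : ℂ) * I)) =
                ((a k : ℝ) : ℂ) * (w * Complex.exp (((-t : ℝ) : ℂ) * I)) := by
              rw [map_mul, map_mul, hconjexp, Complex.conj_ofReal, hw]
              ring
            rw [hx, Complex.re_ofReal_mul]
            congr 1
            rw [Complex.mul_re, Complex.exp_ofReal_mul_I_re, Complex.exp_ofReal_mul_I_im,
              Real.cos_neg, Real.sin_neg]
            ring
          rw [hA, hB]
          ring
        -- S θ itself via t = 0
        have h0 : S θ = (S θ - (a k : ℂ) * E θ k) +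
            ((a k : ℂ) * E θ k) * Complex.exp (((0 : ℝ) : ℂ) * I) := by
          rw [Complex.ofReal_zero, zero_mul, Complex.exp_zero, mul_one]
          ring
        have hnθ : Complex.normSq (S θ) = Complex.normSq (S θ - (a k : ℂ) * E θ k) +
            (a k) ^ 2 + 2 * (a k) * (w.re * Real.cos 0 + w.im * Real.sin 0) := by
          conv_lhs => rw [h0]
          rw [hexp 0]
        -- local max condition along coordinate k
        have hball : ∀ t : ℝ, |t| < δ →
            w.re * Real.cos t + w.im * Real.sin t ≤ w.re := by
          intro t ht
          set ψ : EuclideanSpace ℝ (Fin N) := θ + t • (EuclideanSpace.single k (1 : ℝ))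
            with hψdef
          have hmem : ψ ∈ Metric.ball θ δ := by
            rw [Metric.mem_ball, dist_eq_norm, hψdef, add_sub_cancel_left, norm_smul,
              EuclideanSpace.norm_single]
            simpa using ht
          have hψi : ∀ i, ψ i = θ i + (if i = k then t else 0) := by
            intro i
            rw [hψdef]
            simp [EuclideanSpace.single_apply, mul_ite, PiLp.add_apply, PiLp.smul_apply,
              smul_eq_mul]
          have hSψ : S ψ = (S θ - (a k : ℂ) * E θ k) +
              ((a k : ℂ) * E θ k) * Complex.exp ((t : ℂ) * I) := by
            have hdiff : S ψ - S θ = (a k : ℂ) * E θ k * (Complex.exp ((t : ℂ) * I) - 1) := by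
              simp only [hSdef]
              rw [← Finset.sum_sub_distrib, Finset.sum_eq_single k]
              · have hEψ : E ψ k = E θ k * Complex.exp ((t : ℂ) * I) := by
                  simp only [hE]
                  rw [← Complex.exp_add]
                  congr 1
                  rw [hψi k, if_pos rfl]
                  push_cast
                  ring
                rw [hEψ]
                ring
              · intro i _ hik
                have hEψ : E ψ i = E θ i := by
                  simp only [hE]
                  rw [hψi i, if_neg hik, add_zero]
                rw [hEψ, sub_self]
              · intro hk
                exact absurd (Finset.mem_univ k) hk
            linear_combination hdiff
          have hle' := hmax ψ hmem
          rw [hMagS, hMagS] at hle'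
          have hns : Complex.normSq (S ψ) ≤ Complex.normSq (S θ) := by
            rw [Complex.normSq_eq_norm_sq, Complex.normSq_eq_norm_sq]
            exact pow_le_pow_left₀ (norm_nonneg _) hle' 2
          rw [hSψ, hexp t, hnθ] at hns
          simp only [Real.cos_zero, Real.sin_zero, mul_one, mul_zero, add_zero] at hns
          nlinarith [ha k, hns]
        obtain ⟨hv, hu⟩ := auxA w.re w.im δ hδ hball
        have h1E : E θ k * (starRingEnd ℂ) (E θ k) = 1 := by
          rw [Complex.mul_conj]
          rw [Complex.normSq_eq_norm_sq, habsE]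
          norm_num
        have hSconj : S θ * (starRingEnd ℂ) (E θ k) = w + (a k : ℂ) := by
          rw [hw]
          linear_combination ((a k : ℂ)) * h1E
        have hre : (S θ * (starRingEnd ℂ) (E θ k)).re = w.re + a k := by
          rw [hSconj]; simp
        have him : (S θ * (starRingEnd ℂ) (E θ k)).im = 0 := by
          rw [hSconj]; simp [hv]
        have habsk : ‖S θ * (starRingEnd ℂ) (E θ k)‖ = ‖S θ‖ := by
          rw [norm_mul, Complex.norm_conj, habsE, mul_one]
        have habsre : ‖S θ * (starRingEnd ℂ) (E θ k)‖ =
            (S θ * (starRingEnd ℂ) (E θ k)).re := by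
          rw [Complex.norm_def, Complex.normSq_apply, him, mul_zero, add_zero]
          exact Real.sqrt_mul_self (by rw [hre]; linarith [ha k, hu])
        constructor
        · have hcoe : S θ * (starRingEnd ℂ) (E θ k) =
              (((S θ * (starRingEnd ℂ) (E θ k)).re : ℝ) : ℂ) :=
            Complex.ext rfl (by simp [him])
          exact hcoe.trans (congrArg Complex.ofReal (habsre.symm.trans habsk))
        · rw [hre]
          linarith [hu]
      obtain ⟨k0⟩ := hN
      have hreq : (S θ * (starRingEnd ℂ) (E θ k0)).re = ‖S θ‖ := by
        rw [(main k0).1]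
        simp
      have hposS : 0 < ‖S θ‖ := by
        have hk := (main k0).2
        rw [hreq] at hk
        linarith [ha k0]
      exact h3r θ (hkey θ hposS (fun k => (main k).1))
  refine ⟨h1, h2, fun θ => ⟨h3l θ, h3r θ⟩⟩
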